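/- Let Y be a normed space whose norm ‖·‖ is Fréchet differentiable on Y∖{0} with derivative g uniformly continuous on {y : ‖y‖ ≥ 1/2}, with modulus of continuity ω. Then for all y, h ∈ Y with ‖y‖ = ‖h‖ = 1 and all τ ∈ (0, 1/2), one has ‖y + τh‖ + ‖y − τh‖ − 2 ≤ ω(2τ)·τ. -/

import Mathlib

open Metric Set

theorem norm_second_difference_bound {Y : Type*} [NormedAddCommGroup Y] [NormedSpace ℝ Y]
    (g : Y → Y →L[ℝ] ℝ) (ω : ℝ → ℝ)
    (hg : ∀ y : Y, y ≠ 0 → HasFDerivAt (fun z : Y => ‖z‖) (g y) y)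
    (hω : Monotone ω)
    (hωg : ∀ u v : Y, 1 / 2 ≤ ‖u‖ → 1 / 2 ≤ ‖v‖ → ‖g u - g v‖ ≤ ω ‖u - v‖)
    (y h : Y) (hy : ‖y‖ = 1) (hh : ‖h‖ = 1) (τ : ℝ) (hτ : τ ∈ Set.Ioo (0 : ℝ) (1 / 2)) :
    ‖y + τ • h‖ + ‖y - τ • h‖ - 2 ≤ ω (2 * τ) * τ := by
  obtain ⟨hτ0, hτ2⟩ := hτ
  have key : ∀ t : ℝ, |t| ≤ τ → (1:ℝ)/2 ≤ ‖y + t • h‖ := by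
    intro t ht
    have h1 : ‖y‖ ≤ ‖y + t • h‖ + ‖t • h‖ := by
      calc ‖y‖ = ‖(y + t • h) - t • h‖ := by rw [add_sub_cancel_right]
        _ ≤ ‖y + t • h‖ + ‖t • h‖ := norm_sub_le _ _
    have h2 : ‖t • h‖ = |t| := by rw [norm_smul, hh]; simp
    rw [h2, hy] at h1
    linarith
  have keyne : ∀ t : ℝ, |t| ≤ τ → y + t • h ≠ 0 := by
    intro t ht hcon
    have := key t ht
    rw [hcon] at this
    simp at this
    linarith
  have deriv1 : ∀ t : ℝ, |t| ≤ τ →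
      HasDerivAt (fun t : ℝ => ‖y + t • h‖) (g (y + t • h) h) t := by
    intro t ht
    have hin : HasDerivAt (fun t : ℝ => y + t • h) h t := by
      simpa using ((hasDerivAt_id t).smul_const h).const_add y
    have := (hg _ (keyne t ht)).comp_hasDerivAt t hin
    simpa [Function.comp_def] using this
  have deriv2 : ∀ t : ℝ, |t| ≤ τ →
      HasDerivAt (fun t : ℝ => ‖y - t • h‖) (-(g (y + (-t) • h) h)) t := by
    intro t ht
    have hin : HasDerivAt (fun t : ℝ => y - t • h) (-h) t := by
      simpa using ((hasDerivAt_id t).smul_const h).const_sub y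
    have hne : y - t • h ≠ 0 := by
      have := keyne (-t) (by rwa [abs_neg]); simpa [neg_smul, sub_eq_add_neg] using this
    have := (hg _ hne).comp_hasDerivAt t hin
    simpa [neg_smul, sub_eq_add_neg, Function.comp_def] using this
  -- MVT for f₁
  have cont1 : ContinuousOn (fun t : ℝ => ‖y + t • h‖) (Icc 0 τ) :=
    (Continuous.norm (by continuity)).continuousOn
  have cont2 : ContinuousOn (fun t : ℝ => ‖y - t • h‖) (Icc 0 τ) :=
    (Continuous.norm (by continuity)).continuousOn
  obtain ⟨c, hc, hceq⟩ := exists_hasDerivAt_eq_slope (fun t : ℝ => ‖y + t • h‖)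
    (fun t => g (y + t • h) h) hτ0 cont1 (fun x hx => deriv1 x (by
      rw [abs_of_pos hx.1]; exact hx.2.le))
  obtain ⟨d, hd, hdeq⟩ := exists_hasDerivAt_eq_slope (fun t : ℝ => ‖y - t • h‖)
    (fun t => -(g (y + (-t) • h) h)) hτ0 cont2 (fun x hx => deriv2 x (by
      rw [abs_of_pos hx.1]; exact hx.2.le))
  simp only [zero_smul, add_zero, sub_zero, hy] at hceq hdeq
  -- bound the difference of derivatives
  have hcabs : |c| ≤ τ := by rw [abs_of_pos hc.1]; exact hc.2.le
  have hdabs : |(-d)| ≤ τ := by rw [abs_neg, abs_of_pos hd.1]; exact hd.2.le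
  have hbound : g (y + c • h) h - g (y + (-d) • h) h ≤ ω (2 * τ) := by
    have h1 : g (y + c • h) h - g (y + (-d) • h) h
        = (g (y + c • h) - g (y + (-d) • h)) h := by simp
    rw [h1]
    calc (g (y + c • h) - g (y + (-d) • h)) h
        ≤ ‖g (y + c • h) - g (y + (-d) • h)‖ * ‖h‖ :=
          le_trans (le_abs_self _) ((g (y + c • h) - g (y + (-d) • h)).le_opNorm h)
      _ = ‖g (y + c • h) - g (y + (-d) • h)‖ := by rw [hh, mul_one]
      _ ≤ ω ‖(y + c • h) - (y + (-d) • h)‖ :=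
          hωg _ _ (key c hcabs) (key (-d) hdabs)
      _ ≤ ω (2 * τ) := by
          apply hω
          have heq : (y + c • h) - (y + (-d) • h) = (c + d) • h := by module
          rw [heq, norm_smul, hh, mul_one, Real.norm_eq_abs,
            abs_of_pos (by linarith [hc.1, hd.1] : (0:ℝ) < c + d)]
          linarith [hc.2, hd.2]
  -- combine
  have e1 : ‖y + τ • h‖ - 1 = g (y + c • h) h * τ := by
    field_simp at hceq; linarith [hceq]
  have e2 : ‖y - τ • h‖ - 1 = -(g (y + (-d) • h) h) * τ := by
    field_simp at hdeq; linarith [hdeq]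
  nlinarith [hbound, hτ0]
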